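/- Let G be a nonadaptive three-query PCP game and let G' be its oracularization with a dummy question. For every commuting-operator strategy of G' there exists a commuting-operator strategy of G' with the same winning probability in which, whenever the second prover receives two identical questions (q, q), his two answers are always identical; that is, the probability of answering (a'_1, a'_2) with a'_1 ≠ a'_2 upon question pair (q, q) is zero (equivalently, the second prover's measurement operators satisfy ⟨Ψ, N_{qq}^{a'_1 a'_2} Ψ⟩-terms vanish for a'_1 ≠ a'_2, and one may take N_{qq}^{a'_1 a'_2} = 0 for a'_1 ≠ a'_2). Moreover, the new strategy can be taken with a pure shared state and projective measurements if the original one was so. -/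

import Mathlib

open scoped ComplexInnerProductSpace

attribute [local instance] Classical.propDecidable

noncomputable section

/-- The `i`-th component of a triple. -/
def tripleGet {α : Type*} (i : Fin 3) (x y z : α) : α := ![x, y, z] i

/-- Acceptance probability of one branch of the verifier of the oracularized game with a dummy
question (see `dummyWinProb`). -/
def branchScore (Qn : ℕ) {A : Type*} [Fintype A]
    (R : Fin Qn → Fin Qn → Fin Qn → A → A → A → Bool)
    (p : Fin Qn → Fin Qn → Fin Qn → Fin Qn → Fin Qn → (A × A × A) → (A × A) → ℝ)
    (q₁ q₂ q₃ p₁ p₂ : Fin Qn) (i : Fin 3) (firstReal : Bool) : ℝ :=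
  ∑ a : A × A × A, ∑ b : A × A,
    p q₁ q₂ q₃ p₁ p₂ a b *
      (if R q₁ q₂ q₃ a.1 a.2.1 a.2.2 = true ∧
          (if firstReal then b.1 else b.2) = tripleGet i a.1 a.2.1 a.2.2 then 1 else 0)

/-- The winning probability in the oracularization with a dummy question of the PCP game
`(Qn, A, R, π)`, for provers whose joint conditional answer probabilities are given by `p`. -/
def dummyWinProb (Qn : ℕ) {A : Type*} [Fintype A]
    (π : Fin Qn → Fin Qn → Fin Qn → ℝ)
    (R : Fin Qn → Fin Qn → Fin Qn → A → A → A → Bool)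
    (p : Fin Qn → Fin Qn → Fin Qn → Fin Qn → Fin Qn → (A × A × A) → (A × A) → ℝ) : ℝ :=
  ∑ q₁, ∑ q₂, ∑ q₃, ∑ t₁, ∑ t₂, ∑ t₃,
    π q₁ q₂ q₃ * π t₁ t₂ t₃ * (1 / 9) *
      ∑ i : Fin 3, ∑ j : Fin 3,
        (let q := tripleGet i q₁ q₂ q₃
         let qt := tripleGet j t₁ t₂ t₃
         if q < qt then branchScore Qn R p q₁ q₂ q₃ q qt i true
         else if qt < q then branchScore Qn R p q₁ q₂ q₃ qt q i false
         else (branchScore Qn R p q₁ q₂ q₃ q q i true +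
               branchScore Qn R p q₁ q₂ q₃ q q i false) / 2)

/-- A commuting-operator strategy of the oracularization with a dummy question of a
nonadaptive three-query PCP game with positions `[Qn]` and answer alphabet `A`: a Hilbert
space, a (pure) shared unit state, a POVM for each question `(q₁,q₂,q₃) ∈ [Qn]³` to the first
prover and a POVM for each question `(p₁,p₂) ∈ [Qn]²` to the second prover, all measurement
operators of the first prover commuting with all those of the second. -/
structure DummyCommutingStrategy (Qn : ℕ) (A : Type*) [Fintype A] where
  H : Type*
  [normedH : NormedAddCommGroup H]
  [innerH : InnerProductSpace ℂ H]
  [completeH : CompleteSpace H]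
  Psi : H
  M : Fin Qn → Fin Qn → Fin Qn → (A × A × A) → (H →L[ℂ] H)
  N : Fin Qn → Fin Qn → (A × A) → (H →L[ℂ] H)
  norm_Psi : ‖Psi‖ = 1
  M_pos : ∀ q₁ q₂ q₃ a, (M q₁ q₂ q₃ a).IsPositive
  M_sum : ∀ q₁ q₂ q₃, (∑ a, M q₁ q₂ q₃ a) = 1
  N_pos : ∀ p₁ p₂ b, (N p₁ p₂ b).IsPositive
  N_sum : ∀ p₁ p₂, (∑ b, N p₁ p₂ b) = 1
  commute : ∀ q₁ q₂ q₃ p₁ p₂ a b, M q₁ q₂ q₃ a * N p₁ p₂ b = N p₁ p₂ b * M q₁ q₂ q₃ a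

attribute [instance] DummyCommutingStrategy.normedH DummyCommutingStrategy.innerH
  DummyCommutingStrategy.completeH

/-- The winning probability of a commuting-operator strategy in the oracularization with a
dummy question: the provers answer `(a, b)` with probability `⟨Ψ, M^a N^b Ψ⟩`. -/
def DummyCommutingStrategy.winProb {Qn : ℕ} {A : Type*} [Fintype A]
    (π : Fin Qn → Fin Qn → Fin Qn → ℝ)
    (R : Fin Qn → Fin Qn → Fin Qn → A → A → A → Bool)
    (S : DummyCommutingStrategy Qn A) : ℝ :=
  dummyWinProb Qn π R
    (fun q₁ q₂ q₃ p₁ p₂ a b => (⟪S.Psi, (S.M q₁ q₂ q₃ a * S.N p₁ p₂ b) S.Psi⟫).re)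

/-- A strategy is projective when all its measurement operators are (self-adjoint)
projections. -/
def DummyCommutingStrategy.Projective {Qn : ℕ} {A : Type*} [Fintype A]
    (S : DummyCommutingStrategy Qn A) : Prop :=
  (∀ q₁ q₂ q₃ a, IsSelfAdjoint (S.M q₁ q₂ q₃ a) ∧
      S.M q₁ q₂ q₃ a * S.M q₁ q₂ q₃ a = S.M q₁ q₂ q₃ a) ∧
  (∀ p₁ p₂ b, IsSelfAdjoint (S.N p₁ p₂ b) ∧ S.N p₁ p₂ b * S.N p₁ p₂ b = S.N p₁ p₂ b)

/-! ### Auxiliary material: block-diagonal operators on `WithLp 2 (H × H)` -/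

section DiagOp

set_option linter.unusedSectionVars false

variable {H : Type*} [NormedAddCommGroup H] [InnerProductSpace ℂ H] [CompleteSpace H]

/-- The block-diagonal operator `T ⊕ S` on the Hilbert-space direct sum `H ⊕₂ H`. -/
def diagOp (T S : H →L[ℂ] H) : WithLp 2 (H × H) →L[ℂ] WithLp 2 (H × H) :=
  (((WithLp.prodContinuousLinearEquiv 2 ℂ H H).symm : H × H →L[ℂ] WithLp 2 (H × H)) ∘L
    ((T.prodMap S) ∘L ((WithLp.prodContinuousLinearEquiv 2 ℂ H H) : WithLp 2 (H × H) →L[ℂ] H × H)))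

@[simp] lemma diagOp_apply_fst (T S : H →L[ℂ] H) (x : WithLp 2 (H × H)) :
    (diagOp T S x).fst = T x.fst := by
  simp [diagOp, WithLp.toLp_fst]

@[simp] lemma diagOp_apply_snd (T S : H →L[ℂ] H) (x : WithLp 2 (H × H)) :
    (diagOp T S x).snd = S x.snd := by
  simp [diagOp, WithLp.toLp_snd]

lemma withLp_prod_ext {x y : WithLp 2 (H × H)} (h1 : x.fst = y.fst) (h2 : x.snd = y.snd) :
    x = y := by
  apply (WithLp.equiv 2 (H × H)).injective
  apply Prod.ext <;> simpa [WithLp.ofLp_fst, WithLp.ofLp_snd]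

lemma inner_diagOp (T S : H →L[ℂ] H) (x y : WithLp 2 (H × H)) :
    ⟪x, diagOp T S y⟫ = ⟪x.fst, T y.fst⟫ + ⟪x.snd, S y.snd⟫ := by
  rw [WithLp.prod_inner_apply]; simp

lemma diagOp_inner (T S : H →L[ℂ] H) (x y : WithLp 2 (H × H)) :
    ⟪diagOp T S x, y⟫ = ⟪T x.fst, y.fst⟫ + ⟪S x.snd, y.snd⟫ := by
  rw [WithLp.prod_inner_apply]; simp

lemma diagOp_mul (T S T' S' : H →L[ℂ] H) :
    diagOp T S * diagOp T' S' = diagOp (T * T') (S * S') := by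
  ext x
  exact withLp_prod_ext (by simp [ContinuousLinearMap.mul_apply])
    (by simp [ContinuousLinearMap.mul_apply])

lemma diagOp_one : diagOp (1 : H →L[ℂ] H) 1 = 1 := by
  ext x; exact withLp_prod_ext (by simp) (by simp)

lemma diagOp_add (T S T' S' : H →L[ℂ] H) :
    diagOp (T + T') (S + S') = diagOp T S + diagOp T' S' := by
  ext x
  exact withLp_prod_ext (by simp [WithLp.add_fst]) (by simp [WithLp.add_snd])

lemma diagOp_zero : diagOp (0 : H →L[ℂ] H) 0 = 0 := by
  ext x
  exact withLp_prod_ext (by simp [WithLp.zero_fst]) (by simp [WithLp.zero_snd])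

lemma diagOp_sum {ι : Type*} (s : Finset ι) (T S : ι → H →L[ℂ] H) :
    diagOp (∑ i ∈ s, T i) (∑ i ∈ s, S i) = ∑ i ∈ s, diagOp (T i) (S i) := by
  classical
  induction s using Finset.induction with
  | empty => simpa using diagOp_zero
  | insert _ _ hi ih =>
    rw [Finset.sum_insert hi, Finset.sum_insert hi, Finset.sum_insert hi, diagOp_add, ih]

lemma diagOp_adjoint (T S : H →L[ℂ] H) :
    diagOp (ContinuousLinearMap.adjoint T) (ContinuousLinearMap.adjoint S) =
      ContinuousLinearMap.adjoint (diagOp T S) := by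
  rw [ContinuousLinearMap.eq_adjoint_iff]
  intro x y
  rw [diagOp_inner, inner_diagOp, ContinuousLinearMap.adjoint_inner_left,
    ContinuousLinearMap.adjoint_inner_left]

lemma diagOp_isSelfAdjoint {T S : H →L[ℂ] H} (hT : IsSelfAdjoint T) (hS : IsSelfAdjoint S) :
    IsSelfAdjoint (diagOp T S) := by
  rw [ContinuousLinearMap.isSelfAdjoint_iff'] at *
  rw [← diagOp_adjoint, hT, hS]

lemma diagOp_isPositive {T S : H →L[ℂ] H} (hT : T.IsPositive) (hS : S.IsPositive) :
    (diagOp T S).IsPositive := by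
  refine ⟨(diagOp_isSelfAdjoint hT.isSelfAdjoint hS.isSelfAdjoint).isSymmetric, fun x => ?_⟩
  have h : (diagOp T S).reApplyInnerSelf x = Complex.re ⟪diagOp T S x, x⟫ := rfl
  rw [h, diagOp_inner, Complex.add_re]
  exact add_nonneg (hT.re_inner_nonneg_left x.fst) (hS.re_inner_nonneg_left x.snd)

/-- The symmetrized doubled state `(ψ/√2, ψ/√2)` in `H ⊕₂ H`. -/
def doublePsi (ψ : H) : WithLp 2 (H × H) :=
  (WithLp.equiv 2 (H × H)).symm ((((Real.sqrt 2)⁻¹ : ℝ) : ℂ) • ψ, (((Real.sqrt 2)⁻¹ : ℝ) : ℂ) • ψ)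

@[simp] lemma doublePsi_fst (ψ : H) :
    (doublePsi ψ).fst = (((Real.sqrt 2)⁻¹ : ℝ) : ℂ) • ψ := by
  rw [doublePsi]; rfl

@[simp] lemma doublePsi_snd (ψ : H) :
    (doublePsi ψ).snd = (((Real.sqrt 2)⁻¹ : ℝ) : ℂ) • ψ := by
  rw [doublePsi]; rfl

lemma sq_inv_sqrt_two : ((Real.sqrt 2)⁻¹) ^ 2 = (1/2 : ℝ) := by
  rw [inv_pow, Real.sq_sqrt (by norm_num : (2:ℝ) ≥ 0)]
  norm_num

lemma norm_doublePsi (ψ : H) (hψ : ‖ψ‖ = 1) : ‖doublePsi ψ‖ = 1 := by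
  rw [WithLp.prod_norm_eq_of_L2, doublePsi_fst, doublePsi_snd, norm_smul, hψ]
  have h1 : ‖(((Real.sqrt 2)⁻¹ : ℝ) : ℂ)‖ = (Real.sqrt 2)⁻¹ := by
    rw [Complex.norm_real, Real.norm_eq_abs, abs_of_nonneg]
    positivity
  rw [h1, mul_one]
  rw [sq_inv_sqrt_two]
  norm_num

lemma re_inner_doublePsi (T T' : H →L[ℂ] H) (ψ : H) :
    (⟪doublePsi ψ, diagOp T T' (doublePsi ψ)⟫).re
      = (1/2) * ((⟪ψ, T ψ⟫).re + (⟪ψ, T' ψ⟫).re) := by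
  rw [inner_diagOp, doublePsi_fst, doublePsi_snd]
  have key : ∀ U : H →L[ℂ] H,
      ⟪(((Real.sqrt 2)⁻¹ : ℝ) : ℂ) • ψ, U ((((Real.sqrt 2)⁻¹ : ℝ) : ℂ) • ψ)⟫
        = (((1/2 : ℝ)) : ℂ) * ⟪ψ, U ψ⟫ := by
    intro U
    rw [map_smul, inner_smul_left, inner_smul_right, Complex.conj_ofReal, ← mul_assoc,
      ← Complex.ofReal_mul, ← sq]
    rw [sq_inv_sqrt_two]
  rw [key T, key T', Complex.add_re, Complex.re_ofReal_mul, Complex.re_ofReal_mul]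
  ring

lemma re_inner_doublePsi_same (T : H →L[ℂ] H) (ψ : H) :
    (⟪doublePsi ψ, diagOp T T (doublePsi ψ)⟫).re = (⟪ψ, T ψ⟫).re := by
  rw [re_inner_doublePsi]; ring

/-! Projections -/

lemma isPositive_of_proj {P : H →L[ℂ] H} (hsa : IsSelfAdjoint P) (h : P * P = P) :
    P.IsPositive := by
  refine ⟨hsa.isSymmetric, fun x => ?_⟩
  have hPx : P x = P (P x) := by
    have := congrFun (congrArg DFunLike.coe h) x
    simpa [ContinuousLinearMap.mul_apply] using this.symm
  have hsym := (ContinuousLinearMap.isSelfAdjoint_iff_isSymmetric.mp hsa) (P x) x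
  simp only [ContinuousLinearMap.coe_coe] at hsym
  show 0 ≤ Complex.re ⟪P x, x⟫
  calc (0:ℝ) ≤ Complex.re ⟪P x, P x⟫ := inner_self_nonneg (𝕜 := ℂ)
  _ = Complex.re ⟪P (P x), x⟫ := by rw [hsym]
  _ = Complex.re ⟪P x, x⟫ := by rw [← hPx]

lemma sum_isPositive {ι : Type*} (s : Finset ι) (P : ι → H →L[ℂ] H)
    (h : ∀ i ∈ s, (P i).IsPositive) : (∑ i ∈ s, P i).IsPositive := by
  classical
  induction s using Finset.induction with
  | empty => simpa using ContinuousLinearMap.isPositive_zero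
  | insert _ _ hi ih =>
    rw [Finset.sum_insert hi]
    exact (h _ (Finset.mem_insert_self _ _)).add
      (ih fun i hi' => h i (Finset.mem_insert_of_mem hi'))

lemma sum_isSelfAdjoint {ι : Type*} (s : Finset ι) (P : ι → H →L[ℂ] H)
    (h : ∀ i ∈ s, IsSelfAdjoint (P i)) : IsSelfAdjoint (∑ i ∈ s, P i) := by
  rw [IsSelfAdjoint, star_sum]
  exact Finset.sum_congr rfl h

lemma proj_orthogonal {ι : Type*} [Fintype ι] (P : ι → H →L[ℂ] H)
    (hsa : ∀ i, IsSelfAdjoint (P i)) (hidem : ∀ i, P i * P i = P i)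
    (hsum : (∑ i, P i) = 1) {i j : ι} (hij : i ≠ j) : P i * P j = 0 := by
  classical
  ext y
  show P i (P j y) = 0
  have hx : P j (P j y) = P j y := by
    have := congrFun (congrArg DFunLike.coe (hidem j)) y
    simpa [ContinuousLinearMap.mul_apply] using this
  set x := P j y with hxdef
  set Q : H →L[ℂ] H := ∑ k ∈ (Finset.univ.erase i).erase j, P k with hQ
  have hdecomp : P i + P j + Q = 1 := by
    rw [hQ, ← hsum,
      ← Finset.add_sum_erase _ P (Finset.mem_univ i),
      ← Finset.add_sum_erase _ P (Finset.mem_erase.mpr ⟨hij.symm, Finset.mem_univ j⟩)]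
    abel
  have hQpos : Q.IsPositive := sum_isPositive _ _ fun k _ => isPositive_of_proj (hsa k) (hidem k)
  have h1 : 0 ≤ Complex.re ⟪Q x, x⟫ := hQpos.re_inner_nonneg_left x
  have h2 : Q x = x - P i x - P j x := by
    have h := congrFun (congrArg DFunLike.coe hdecomp) x
    simp only [ContinuousLinearMap.add_apply, ContinuousLinearMap.one_apply] at h
    linear_combination (norm := abel) h
  have h3 : Complex.re ⟪P i x, x⟫ ≤ 0 := by
    rw [h2, inner_sub_left, inner_sub_left, hx] at h1
    simp only [Complex.sub_re] at h1
    linarith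
  have hPix : P i x = P i (P i x) := by
    have := congrFun (congrArg DFunLike.coe (hidem i)) x
    simpa [ContinuousLinearMap.mul_apply] using this.symm
  have hsym := (ContinuousLinearMap.isSelfAdjoint_iff_isSymmetric.mp (hsa i)) (P i x) x
  simp only [ContinuousLinearMap.coe_coe] at hsym
  have h4 : Complex.re ⟪P i x, x⟫ = Complex.re ⟪P i x, P i x⟫ := by
    conv_lhs => rw [hPix, hsym]
  have h5 : Complex.re ⟪P i x, P i x⟫ = 0 :=
    le_antisymm (h4 ▸ h3) (inner_self_nonneg (𝕜 := ℂ))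
  have h6 : ⟪P i x, P i x⟫ = 0 := by
    apply Complex.ext
    · exact h5
    · exact inner_self_im (𝕜 := ℂ) (P i x)
  exact inner_self_eq_zero.mp h6

lemma proj_sum_idem {ι κ : Type*} [Fintype ι] [Fintype κ] (P : ι → H →L[ℂ] H)
    (hsa : ∀ i, IsSelfAdjoint (P i)) (hidem : ∀ i, P i * P i = P i)
    (hsum : (∑ i, P i) = 1) (f : κ → ι) (hf : Function.Injective f) :
    (∑ c, P (f c)) * (∑ c, P (f c)) = ∑ c, P (f c) := by
  classical
  rw [Finset.sum_mul_sum]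
  refine Finset.sum_congr rfl fun c _ => ?_
  rw [Finset.sum_eq_single c
    (fun d _ hd => proj_orthogonal P hsa hidem hsum (fun h => hd (hf h).symm))
    (fun h => absurd (Finset.mem_univ c) h)]
  exact hidem (f c)

end DiagOp

/-! ### Auxiliary material: combinatorial sum identities -/

section Sums

variable {A : Type*} [Fintype A] {Qn : ℕ}

lemma key_swap (F : A → ℝ) (χ' : A → ℝ) :
    ∑ b : A × A, (if b.1 = b.2 then F b.1 else 0) * χ' b.2
      = ∑ b : A × A, (if b.1 = b.2 then F b.1 else 0) * χ' b.1 := by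
  refine Finset.sum_congr rfl fun b _ => ?_
  by_cases h : b.1 = b.2
  · rw [if_pos h, h]
  · rw [if_neg h, zero_mul, zero_mul]

lemma key_split (g : A × A → ℝ) (χ : A → ℝ) :
    ∑ b : A × A, (if b.1 = b.2 then (1/2) * ((∑ c, g (b.1, c)) + (∑ c, g (c, b.1))) else 0) * χ b.1
      = (1/2) * ((∑ b : A × A, g b * χ b.1) + (∑ b : A × A, g b * χ b.2)) := by
  rw [Fintype.sum_prod_type]
  have step : ∀ b₁ : A,
      (∑ b₂ : A, (if b₁ = b₂ then (1/2) * ((∑ c, g (b₁, c)) + (∑ c, g (c, b₁))) else 0) * χ b₁)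
        = (1/2) * ((∑ c, g (b₁, c) * χ b₁) + (∑ c, g (c, b₁) * χ b₁)) := by
    intro b₁
    rw [Finset.sum_congr rfl (fun b₂ _ => by rw [ite_mul, zero_mul]), Finset.sum_ite_eq]
    simp only [Finset.mem_univ, if_true]
    rw [mul_assoc, add_mul, Finset.sum_mul, Finset.sum_mul]
  rw [Finset.sum_congr rfl (fun b₁ _ => step b₁), ← Finset.mul_sum, Finset.sum_add_distrib]
  congr 1
  congr 1
  · rw [Fintype.sum_prod_type]
  · rw [Fintype.sum_prod_type, Finset.sum_comm]

lemma branchScore_congr (R : Fin Qn → Fin Qn → Fin Qn → A → A → A → Bool)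
    (p p' : Fin Qn → Fin Qn → Fin Qn → Fin Qn → Fin Qn → (A × A × A) → (A × A) → ℝ)
    (q₁ q₂ q₃ p₁ p₂ : Fin Qn) (i : Fin 3) (fr : Bool)
    (h : ∀ a b, p' q₁ q₂ q₃ p₁ p₂ a b = p q₁ q₂ q₃ p₁ p₂ a b) :
    branchScore Qn R p' q₁ q₂ q₃ p₁ p₂ i fr = branchScore Qn R p q₁ q₂ q₃ p₁ p₂ i fr := by
  unfold branchScore
  exact Finset.sum_congr rfl fun a _ => Finset.sum_congr rfl fun b _ => by rw [h]

lemma branchScore_diag (R : Fin Qn → Fin Qn → Fin Qn → A → A → A → Bool)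
    (p p' : Fin Qn → Fin Qn → Fin Qn → Fin Qn → Fin Qn → (A × A × A) → (A × A) → ℝ)
    (q₁ q₂ q₃ q : Fin Qn) (i : Fin 3) (fr : Bool)
    (h : ∀ a (b : A × A), p' q₁ q₂ q₃ q q a b =
      if b.1 = b.2 then
        (1/2) * ((∑ c, p q₁ q₂ q₃ q q a (b.1, c)) + (∑ c, p q₁ q₂ q₃ q q a (c, b.1)))
      else 0) :
    branchScore Qn R p' q₁ q₂ q₃ q q i fr
      = (1/2) * (branchScore Qn R p q₁ q₂ q₃ q q i true
          + branchScore Qn R p q₁ q₂ q₃ q q i false) := by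
  unfold branchScore
  rw [← Finset.sum_add_distrib, Finset.mul_sum]
  refine Finset.sum_congr rfl fun a _ => ?_
  rw [Finset.sum_congr rfl fun b _ => by rw [h a b]]
  have hsplit := key_split (fun b => p q₁ q₂ q₃ q q a b)
    (fun x => if (R q₁ q₂ q₃ a.1 a.2.1 a.2.2 = true) ∧ x = tripleGet i a.1 a.2.1 a.2.2
      then 1 else 0)
  have hswap := key_swap
    (fun x => (1/2) * ((∑ c, p q₁ q₂ q₃ q q a (x, c)) + (∑ c, p q₁ q₂ q₃ q q a (c, x))))
    (fun x => if (R q₁ q₂ q₃ a.1 a.2.1 a.2.2 = true) ∧ x = tripleGet i a.1 a.2.1 a.2.2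
      then 1 else 0)
  try simp only at hsplit hswap
  cases fr
  · simp only [Bool.false_eq_true, if_false, if_true]
    rw [hswap, hsplit]
  · simp only [if_true, Bool.false_eq_true, if_false]
    rw [hsplit]

lemma dummyWinProb_congr (π : Fin Qn → Fin Qn → Fin Qn → ℝ)
    (R : Fin Qn → Fin Qn → Fin Qn → A → A → A → Bool)
    (p p' : Fin Qn → Fin Qn → Fin Qn → Fin Qn → Fin Qn → (A × A × A) → (A × A) → ℝ)
    (hoff : ∀ q₁ q₂ q₃ p₁ p₂ (i : Fin 3) (fr : Bool), p₁ ≠ p₂ →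
      branchScore Qn R p' q₁ q₂ q₃ p₁ p₂ i fr = branchScore Qn R p q₁ q₂ q₃ p₁ p₂ i fr)
    (hdiag : ∀ q₁ q₂ q₃ q (i : Fin 3),
      branchScore Qn R p' q₁ q₂ q₃ q q i true + branchScore Qn R p' q₁ q₂ q₃ q q i false
        = branchScore Qn R p q₁ q₂ q₃ q q i true + branchScore Qn R p q₁ q₂ q₃ q q i false) :
    dummyWinProb Qn π R p' = dummyWinProb Qn π R p := by
  unfold dummyWinProb
  refine Finset.sum_congr rfl fun q₁ _ => Finset.sum_congr rfl fun q₂ _ =>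
    Finset.sum_congr rfl fun q₃ _ => Finset.sum_congr rfl fun t₁ _ =>
    Finset.sum_congr rfl fun t₂ _ => Finset.sum_congr rfl fun t₃ _ => ?_
  congr 1
  refine Finset.sum_congr rfl fun i _ => Finset.sum_congr rfl fun j _ => ?_
  dsimp only
  by_cases h1 : tripleGet i q₁ q₂ q₃ < tripleGet j t₁ t₂ t₃
  · rw [if_pos h1, if_pos h1]
    exact hoff _ _ _ _ _ _ _ (ne_of_lt h1)
  · rw [if_neg h1, if_neg h1]
    by_cases h2 : tripleGet j t₁ t₂ t₃ < tripleGet i q₁ q₂ q₃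
    · rw [if_pos h2, if_pos h2]
      exact hoff _ _ _ _ _ _ _ (ne_of_lt h2)
    · rw [if_neg h2, if_neg h2, hdiag]

end Sums

/-- The symmetrization of a strategy: the provers share `(Ψ/√2, Ψ/√2)` on `H ⊕₂ H`, the first
prover measures block-diagonally as before, and on a repeated question the second prover
answers twice the first answer on the first summand, and twice the second answer on the
second summand. -/
def symmetrized {Qn : ℕ} {A : Type*} [Fintype A] (S : DummyCommutingStrategy Qn A) :
    DummyCommutingStrategy Qn A where
  H := WithLp 2 (S.H × S.H)
  Psi := doublePsi S.Psi
  M := fun q₁ q₂ q₃ a => diagOp (S.M q₁ q₂ q₃ a) (S.M q₁ q₂ q₃ a)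
  N := fun p₁ p₂ b =>
    if p₁ = p₂ then
      (if b.1 = b.2 then
        diagOp (∑ c, S.N p₁ p₂ (b.1, c)) (∑ c, S.N p₁ p₂ (c, b.1))
      else 0)
    else diagOp (S.N p₁ p₂ b) (S.N p₁ p₂ b)
  norm_Psi := norm_doublePsi _ S.norm_Psi
  M_pos := fun q₁ q₂ q₃ a => diagOp_isPositive (S.M_pos q₁ q₂ q₃ a) (S.M_pos q₁ q₂ q₃ a)
  M_sum := fun q₁ q₂ q₃ => by
    try dsimp only
    rw [← diagOp_sum, S.M_sum, diagOp_one]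
  N_pos := fun p₁ p₂ b => by
    try dsimp only
    by_cases h : p₁ = p₂
    · rw [if_pos h]
      by_cases hb : b.1 = b.2
      · rw [if_pos hb]
        exact diagOp_isPositive
          (sum_isPositive _ _ fun c _ => S.N_pos p₁ p₂ (b.1, c))
          (sum_isPositive _ _ fun c _ => S.N_pos p₁ p₂ (c, b.1))
      · rw [if_neg hb]; exact ContinuousLinearMap.isPositive_zero
    · rw [if_neg h]; exact diagOp_isPositive (S.N_pos p₁ p₂ b) (S.N_pos p₁ p₂ b)
  N_sum := fun p₁ p₂ => by
    try dsimp only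
    by_cases h : p₁ = p₂
    · subst h
      rw [Finset.sum_congr rfl fun b _ => if_pos rfl, Fintype.sum_prod_type]
      simp only [Finset.sum_ite_eq, Finset.mem_univ, if_true]
      rw [← diagOp_sum]
      have e1 : (∑ b₁ : A, ∑ c : A, S.N p₁ p₁ (b₁, c)) = 1 := by
        rw [← Fintype.sum_prod_type]; exact S.N_sum p₁ p₁
      have e2 : (∑ b₁ : A, ∑ c : A, S.N p₁ p₁ (c, b₁)) = 1 := by
        rw [Finset.sum_comm, ← Fintype.sum_prod_type]; exact S.N_sum p₁ p₁
      rw [e1, e2, diagOp_one]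
    · rw [Finset.sum_congr rfl fun b _ => if_neg h, ← diagOp_sum, S.N_sum, diagOp_one]
  commute := fun q₁ q₂ q₃ p₁ p₂ a b => by
    try dsimp only
    by_cases h : p₁ = p₂
    · rw [if_pos h]
      by_cases hb : b.1 = b.2
      · rw [if_pos hb, diagOp_mul, diagOp_mul, Finset.mul_sum, Finset.mul_sum,
          Finset.sum_mul, Finset.sum_mul,
          Finset.sum_congr rfl fun c _ => S.commute q₁ q₂ q₃ p₁ p₂ a (b.1, c),
          Finset.sum_congr rfl fun c _ => S.commute q₁ q₂ q₃ p₁ p₂ a (c, b.1)]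
      · rw [if_neg hb, mul_zero, zero_mul]
    · rw [if_neg h, diagOp_mul, diagOp_mul, S.commute]

lemma symmetrized_M_apply {Qn : ℕ} {A : Type*} [Fintype A] (S : DummyCommutingStrategy Qn A)
    (q₁ q₂ q₃ : Fin Qn) (a : A × A × A) :
    (symmetrized S).M q₁ q₂ q₃ a = diagOp (S.M q₁ q₂ q₃ a) (S.M q₁ q₂ q₃ a) := rfl

lemma symmetrized_N_apply {Qn : ℕ} {A : Type*} [Fintype A] (S : DummyCommutingStrategy Qn A)
    (p₁ p₂ : Fin Qn) (b : A × A) :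
    (symmetrized S).N p₁ p₂ b =
      if p₁ = p₂ then
        (if b.1 = b.2 then
          diagOp (∑ c, S.N p₁ p₂ (b.1, c)) (∑ c, S.N p₁ p₂ (c, b.1))
        else 0)
      else diagOp (S.N p₁ p₂ b) (S.N p₁ p₂ b) := rfl

/-- For every commuting-operator strategy of the oracularization with a
dummy question of a nonadaptive three-query PCP game, there is a commuting-operator strategy
with the same winning probability in which, on a repeated question pair `(q, q)`, the second
prover's measurement operators for unequal answer pairs vanish (so his two answers always
agree); moreover the new strategy has a pure shared state and can be taken projective if the
original strategy is projective. -/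
theorem symmetrize_repeated_question.{uA, uH} {Qn : ℕ} (hQn : 0 < Qn) {A : Type uA} [Fintype A]
    [Nonempty A]
    (π : Fin Qn → Fin Qn → Fin Qn → ℝ)
    (R : Fin Qn → Fin Qn → Fin Qn → A → A → A → Bool)
    (hπ0 : ∀ q₁ q₂ q₃, 0 ≤ π q₁ q₂ q₃)
    (hπ1 : (∑ q₁, ∑ q₂, ∑ q₃, π q₁ q₂ q₃) = 1)
    (hπsupp : ∀ q₁ q₂ q₃, π q₁ q₂ q₃ ≠ 0 → q₁ < q₂ ∧ q₂ < q₃)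
    (S : DummyCommutingStrategy.{uA, uH} Qn A) :
    ∃ S' : DummyCommutingStrategy.{uA, uH} Qn A,
      S'.winProb π R = S.winProb π R ∧
      (∀ q (b : A × A), b.1 ≠ b.2 → S'.N q q b = 0) ∧
      (S.Projective → S'.Projective) := by
  classical
  refine ⟨symmetrized S, ?_, ?_, ?_⟩
  · -- same winning probability
    have hform : (symmetrized S).winProb π R = dummyWinProb Qn π R
        (fun q₁ q₂ q₃ p₁ p₂ a b =>
          (⟪doublePsi S.Psi,
            ((diagOp (S.M q₁ q₂ q₃ a) (S.M q₁ q₂ q₃ a)) *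
              (if p₁ = p₂ then
                (if b.1 = b.2 then
                  diagOp (∑ c, S.N p₁ p₂ (b.1, c)) (∑ c, S.N p₁ p₂ (c, b.1))
                else 0)
              else diagOp (S.N p₁ p₂ b) (S.N p₁ p₂ b))) (doublePsi S.Psi)⟫).re) := rfl
    rw [hform]
    show _ = dummyWinProb Qn π R _
    apply dummyWinProb_congr
    · -- distinct questions to prover 2
      intro q₁ q₂ q₃ p₁ p₂ i fr hne
      apply branchScore_congr
      intro a b
      simp only [if_neg hne]
      rw [diagOp_mul]
      exact re_inner_doublePsi_same _ _
    · -- repeated questions to prover 2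
      intro q₁ q₂ q₃ q i
      have hpt : ∀ (a : A × A × A) (b : A × A),
          (fun q₁ q₂ q₃ p₁ p₂ a b =>
            (⟪doublePsi S.Psi,
              ((diagOp (S.M q₁ q₂ q₃ a) (S.M q₁ q₂ q₃ a)) *
                (if p₁ = p₂ then
                  (if b.1 = b.2 then
                    diagOp (∑ c, S.N p₁ p₂ (b.1, c)) (∑ c, S.N p₁ p₂ (c, b.1))
                  else 0)
                else diagOp (S.N p₁ p₂ b) (S.N p₁ p₂ b))) (doublePsi S.Psi)⟫).re)
            q₁ q₂ q₃ q q a b =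
          if b.1 = b.2 then
            (1/2) * ((∑ c, (fun q₁ q₂ q₃ p₁ p₂ a b =>
                (⟪S.Psi, (S.M q₁ q₂ q₃ a * S.N p₁ p₂ b) S.Psi⟫).re) q₁ q₂ q₃ q q a (b.1, c))
              + (∑ c, (fun q₁ q₂ q₃ p₁ p₂ a b =>
                (⟪S.Psi, (S.M q₁ q₂ q₃ a * S.N p₁ p₂ b) S.Psi⟫).re) q₁ q₂ q₃ q q a (c, b.1)))
          else 0 := by
        intro a b
        simp only [if_true]
        by_cases hb : b.1 = b.2
        · rw [if_pos hb, if_pos hb, diagOp_mul, re_inner_doublePsi]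
          congr 1
          congr 1
          · rw [Finset.mul_sum, ContinuousLinearMap.sum_apply, inner_sum, Complex.re_sum]
          · rw [Finset.mul_sum, ContinuousLinearMap.sum_apply, inner_sum, Complex.re_sum]
        · rw [if_neg hb, if_neg hb, mul_zero]
          simp
      rw [branchScore_diag R
          (fun q₁ q₂ q₃ p₁ p₂ a b => (⟪S.Psi, (S.M q₁ q₂ q₃ a * S.N p₁ p₂ b) S.Psi⟫).re)
          (fun q₁ q₂ q₃ p₁ p₂ a b =>
            (⟪doublePsi S.Psi,
              ((diagOp (S.M q₁ q₂ q₃ a) (S.M q₁ q₂ q₃ a)) *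
                (if p₁ = p₂ then
                  (if b.1 = b.2 then
                    diagOp (∑ c, S.N p₁ p₂ (b.1, c)) (∑ c, S.N p₁ p₂ (c, b.1))
                  else 0)
                else diagOp (S.N p₁ p₂ b) (S.N p₁ p₂ b))) (doublePsi S.Psi)⟫).re)
          q₁ q₂ q₃ q i true hpt,
        branchScore_diag R
          (fun q₁ q₂ q₃ p₁ p₂ a b => (⟪S.Psi, (S.M q₁ q₂ q₃ a * S.N p₁ p₂ b) S.Psi⟫).re)
          (fun q₁ q₂ q₃ p₁ p₂ a b =>
            (⟪doublePsi S.Psi,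
              ((diagOp (S.M q₁ q₂ q₃ a) (S.M q₁ q₂ q₃ a)) *
                (if p₁ = p₂ then
                  (if b.1 = b.2 then
                    diagOp (∑ c, S.N p₁ p₂ (b.1, c)) (∑ c, S.N p₁ p₂ (c, b.1))
                  else 0)
                else diagOp (S.N p₁ p₂ b) (S.N p₁ p₂ b))) (doublePsi S.Psi)⟫).re)
          q₁ q₂ q₃ q i false hpt]
      ring
  · -- vanishing off-diagonal answers on repeated questions
    intro q b hb
    rw [symmetrized_N_apply, if_pos rfl, if_neg hb]
    rfl
  · -- projectivity is preserved
    rintro ⟨hM, hN⟩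
    constructor
    · intro q₁ q₂ q₃ a
      rw [symmetrized_M_apply]
      refine ⟨diagOp_isSelfAdjoint (hM q₁ q₂ q₃ a).1 (hM q₁ q₂ q₃ a).1, ?_⟩
      erw [diagOp_mul, (hM q₁ q₂ q₃ a).2]
    · intro p₁ p₂ b
      rw [symmetrized_N_apply]
      by_cases h : p₁ = p₂
      · rw [if_pos h]
        by_cases hb : b.1 = b.2
        · rw [if_pos hb]
          subst h
          have hsa := fun c => (hN p₁ p₁ c).1
          have hidem := fun c => (hN p₁ p₁ c).2
          constructor
          · exact diagOp_isSelfAdjoint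
              (sum_isSelfAdjoint _ _ fun c _ => hsa (b.1, c))
              (sum_isSelfAdjoint _ _ fun c _ => hsa (c, b.1))
          · erw [diagOp_mul,
              proj_sum_idem _ hsa hidem (S.N_sum p₁ p₁) (fun c => (b.1, c))
                (fun c d h => by simpa using h),
              proj_sum_idem _ hsa hidem (S.N_sum p₁ p₁) (fun c => (c, b.1))
                (fun c d h => by simpa using h)]
        · rw [if_neg hb]
          exact ⟨IsSelfAdjoint.zero _, zero_mul _⟩
      · rw [if_neg h]
        refine ⟨diagOp_isSelfAdjoint (hN p₁ p₂ b).1 (hN p₁ p₂ b).1, ?_⟩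
        erw [diagOp_mul, (hN p₁ p₂ b).2]

end
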